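/- Let D ⊂ ℝ² be a domain, A ≥ 1, and let γ₁, γ₂ be curves in D with a common endpoint x₀ such that dist(x₀, ∂D) ≥ A⁻¹·min{d(γ₁), d(γ₂)} and cig_d(γᵢ, A) ⊂ D for i = 1,2. Then the concatenation γ of γ₁ and γ₂ at x₀ satisfies cig_d(γ, (2A+1)A) ⊂ D, where d denotes diameter. The analogous statement holds with length ℓ in place of diameter d. -/

import Mathlib

open Set Metric Filter Topology
open scoped ENNReal

noncomputable section

/-- `S` is a connected component of the complement of `Ω`. -/
def IsComplComponent (Ω S : Set ℂ) : Prop := ∃ z ∈ Ωᶜ, S = connectedComponentIn Ωᶜ z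

/-- The inner length metric `λ_Ω`: infimum of lengths of curves in `Ω` joining the points. -/
def innerLen (Ω : Set ℂ) (a b : ℂ) : ℝ≥0∞ :=
  ⨅ γ : {γ : ℝ → ℂ // ContinuousOn γ (Set.Icc 0 1) ∧ Set.MapsTo γ (Set.Icc 0 1) Ω ∧
      γ 0 = a ∧ γ 1 = b}, eVariationOn γ.1 (Set.Icc 0 1)

/-- The inner diameter metric `ρ_Ω`: infimum of diameters of curves in `Ω` joining the points. -/
def innerDiam (Ω : Set ℂ) (a b : ℂ) : ℝ≥0∞ :=
  ⨅ γ : {γ : ℝ → ℂ // ContinuousOn γ (Set.Icc 0 1) ∧ Set.MapsTo γ (Set.Icc 0 1) Ω ∧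
      γ 0 = a ∧ γ 1 = b}, EMetric.diam (γ.1 '' Set.Icc 0 1)

/-- An inner `A`-uniform curve (length version) in `Ω`. -/
def IsInnerUniformCurve (A : ℝ) (Ω : Set ℂ) (γ : ℝ → ℂ) : Prop :=
  ContinuousOn γ (Set.Icc 0 1) ∧ Set.MapsTo γ (Set.Icc 0 1) Ω ∧
  eVariationOn γ (Set.Icc 0 1) ≤ ENNReal.ofReal A * innerLen Ω (γ 0) (γ 1) ∧
  ∀ t ∈ Set.Icc (0:ℝ) 1,
    min (eVariationOn γ (Set.Icc 0 t)) (eVariationOn γ (Set.Icc t 1))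
      ≤ ENNReal.ofReal (A * Metric.infDist (γ t) (frontier Ω))

/-- An inner `A`-uniform domain in the plane. -/
def IsInnerUniformDomain (A : ℝ) (Ω : Set ℂ) : Prop :=
  IsOpen Ω ∧ IsConnected Ω ∧
  ∀ a ∈ Ω, ∀ b ∈ Ω, ∃ γ : ℝ → ℂ, IsInnerUniformCurve A Ω γ ∧ γ 0 = a ∧ γ 1 = b

/-- An `A`-uniform curve in `Ω`. -/
def IsUniformCurve (A : ℝ) (Ω : Set ℂ) (γ : ℝ → ℂ) : Prop :=
  ContinuousOn γ (Set.Icc 0 1) ∧ Set.MapsTo γ (Set.Icc 0 1) Ω ∧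
  eVariationOn γ (Set.Icc 0 1) ≤ ENNReal.ofReal (A * dist (γ 0) (γ 1)) ∧
  ∀ t ∈ Set.Icc (0:ℝ) 1,
    min (eVariationOn γ (Set.Icc 0 t)) (eVariationOn γ (Set.Icc t 1))
      ≤ ENNReal.ofReal (A * Metric.infDist (γ t) (frontier Ω))

/-- An `A`-uniform domain in the plane. -/
def IsUniformDomain (A : ℝ) (Ω : Set ℂ) : Prop :=
  IsOpen Ω ∧ IsConnected Ω ∧
  ∀ a ∈ Ω, ∀ b ∈ Ω, ∃ γ : ℝ → ℂ, IsUniformCurve A Ω γ ∧ γ 0 = a ∧ γ 1 = b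
/-- The diameter `A`-cigar of a curve `γ : [0,1] → ℂ`. -/
def diamCigar (A : ℝ) (γ : ℝ → ℂ) : Set ℂ :=
  ⋃ t ∈ Set.Icc (0:ℝ) 1, EMetric.ball (γ t)
    ((ENNReal.ofReal A)⁻¹ *
      min (EMetric.diam (γ '' Set.Icc 0 t)) (EMetric.diam (γ '' Set.Icc t 1)))

/-- The length `A`-cigar of a curve `γ : [0,1] → ℂ`. -/
def lenCigar (A : ℝ) (γ : ℝ → ℂ) : Set ℂ :=
  ⋃ t ∈ Set.Icc (0:ℝ) 1, EMetric.ball (γ t)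
    ((ENNReal.ofReal A)⁻¹ *
      min (eVariationOn γ (Set.Icc 0 t)) (eVariationOn γ (Set.Icc t 1)))

/-- Concatenation at parameter `1/2` of two curves parametrized on `[0,1]`. -/
def concatAt (γ₁ γ₂ : ℝ → ℂ) : ℝ → ℂ := fun t => if t ≤ 1/2 then γ₁ (2*t) else γ₂ (2*t - 1)

/-- Auxiliary -/
lemma key_arith {a d D' d' M M' : ℝ≥0∞} (ha1 : 1 ≤ a) (haT : a ≠ ∞)
    (hM : d ≤ M) (hD : D' ≤ d' + M') :
    ((2*a+1)*a)⁻¹ * min d D' ≤ a⁻¹ * min d d' ∨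
    d' + ((2*a+1)*a)⁻¹ * min d D' ≤ a⁻¹ * min M M' := by
  have ha0 : a ≠ 0 := by rintro rfl; simp at ha1
  have hc1 : (1:ℝ≥0∞) ≤ 2*a+1 := le_add_self
  have hc0 : (2*a+1 : ℝ≥0∞) ≠ 0 := (lt_of_lt_of_le zero_lt_one hc1).ne'
  have hcT : (2*a+1 : ℝ≥0∞) ≠ ∞ :=
    ENNReal.add_ne_top.2 ⟨ENNReal.mul_ne_top (by norm_num) haT, ENNReal.one_ne_top⟩
  set m := min d D' with hm
  have hmd : m ≤ d := min_le_left _ _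
  have hmD : m ≤ D' := min_le_right _ _
  have hBinv : ((2*a+1)*a)⁻¹ = a⁻¹ * (2*a+1)⁻¹ := by
    rw [ENNReal.mul_inv (Or.inl hc0) (Or.inl hcT), mul_comm]
  by_cases h : m ≤ (2*a+1) * d'
  · left
    have h1 : (2*a+1)⁻¹ * m ≤ d' := by
      calc (2*a+1)⁻¹ * m ≤ (2*a+1)⁻¹ * ((2*a+1) * d') := mul_le_mul_right h _
        _ = d' := by rw [← mul_assoc, ENNReal.inv_mul_cancel hc0 hcT, one_mul]
    have h2 : (2*a+1)⁻¹ * m ≤ d := by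
      calc (2*a+1)⁻¹ * m ≤ 1 * m := mul_le_mul_left (ENNReal.inv_le_one.2 hc1) m
        _ = m := one_mul m
        _ ≤ d := hmd
    calc ((2*a+1)*a)⁻¹ * m = a⁻¹ * ((2*a+1)⁻¹ * m) := by rw [hBinv, mul_assoc]
      _ ≤ a⁻¹ * min d d' := mul_le_mul_right (le_min h2 h1) _
  · right
    push_neg at h
    set ρ := ((2*a+1)*a)⁻¹ * m with hρ
    have haρ : a * ρ = (2*a+1)⁻¹ * m := by
      rw [hρ, hBinv, ← mul_assoc, ← mul_assoc, ENNReal.mul_inv_cancel ha0 haT, one_mul]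
    have hd'aρ : d' ≤ a * ρ := by
      rw [haρ]
      calc d' = (2*a+1)⁻¹ * ((2*a+1) * d') := by
            rw [← mul_assoc, ENNReal.inv_mul_cancel hc0 hcT, one_mul]
        _ ≤ (2*a+1)⁻¹ * m := mul_le_mul_right h.le _
    have hm' : m = 2*a*(a*ρ) + a*ρ := by
      have hcan : ((2*a+1)*a) * ρ = m := by
        rw [hρ, ← mul_assoc,
          ENNReal.mul_inv_cancel (mul_ne_zero hc0 ha0) (ENNReal.mul_ne_top hcT haT), one_mul]
      rw [← hcan]; ring
    have hMM : 2*a*(a*ρ) ≤ M := by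
      refine le_trans ?_ (hmd.trans hM)
      rw [hm']; exact le_self_add
    have hMM' : 2*a*(a*ρ) ≤ M' := by
      have h1 : m - d' ≤ M' := by
        refine le_trans (tsub_le_tsub_right hmD d') ?_
        exact tsub_le_iff_left.2 hD
      have hd'T : d' ≠ ∞ := by
        rintro rfl
        rw [ENNReal.mul_top hc0] at h
        exact not_top_lt h
      refine le_trans (ENNReal.le_sub_of_add_le_right hd'T ?_) h1
      rw [hm']; exact add_le_add_right hd'aρ _
    have hfin : 2*(a*ρ) ≤ a⁻¹ * min M M' := by
      have hcalc : a⁻¹ * (2*a*(a*ρ)) = 2*(a*ρ) := by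
        calc a⁻¹ * (2*a*(a*ρ)) = (a⁻¹*a) * (2*(a*ρ)) := by ring
          _ = 2*(a*ρ) := by rw [ENNReal.inv_mul_cancel ha0 haT, one_mul]
      rw [← hcalc]
      exact mul_le_mul_right (le_min hMM hMM') _
    refine le_trans ?_ hfin
    have hρaρ : ρ ≤ a*ρ := le_mul_of_one_le_left zero_le ha1
    calc d' + ρ ≤ a*ρ + a*ρ := add_le_add hd'aρ hρaρ
      _ = 2*(a*ρ) := (two_mul _).symm

lemma eball_infDist_frontier_subset {D : Set ℂ} (hDo : IsOpen D) {x : ℂ} (hx : x ∈ D) :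
    EMetric.ball x (ENNReal.ofReal (Metric.infDist x (frontier D))) ⊆ D := by
  rw [show EMetric.ball x (ENNReal.ofReal (Metric.infDist x (frontier D))) = Metric.eball x _ from rfl, Metric.emetric_ball]
  by_cases hU : D = univ
  · simp [hU]
  obtain ⟨z, hz, hdz⟩ := exists_mem_frontier_infDist_compl_eq_dist hx hU
  have h1 : Metric.infDist x (frontier D) ≤ Metric.infDist x Dᶜ :=
    hdz ▸ Metric.infDist_le_dist_of_mem hz
  exact (Metric.ball_subset_ball h1).trans Metric.ball_infDist_compl_subset

lemma cigar_step {D : Set ℂ} (hDo : IsOpen D) {A : ℝ} (hA : 1 ≤ A) {x₀ p : ℂ} (hx₀ : x₀ ∈ D)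
    {d D' d' M M' : ℝ≥0∞} (hM : d ≤ M) (hD' : D' ≤ d' + M')
    (hpd : edist p x₀ ≤ d')
    (hball : EMetric.ball p ((ENNReal.ofReal A)⁻¹ * min d d') ⊆ D)
    (hr : (ENNReal.ofReal A)⁻¹ * min M M' ≤ ENNReal.ofReal (Metric.infDist x₀ (frontier D))) :
    EMetric.ball p ((ENNReal.ofReal ((2*A+1)*A))⁻¹ * min d D') ⊆ D := by
  set a := ENNReal.ofReal A with ha
  have ha1 : 1 ≤ a := by
    rw [ha, ← ENNReal.ofReal_one]; exact ENNReal.ofReal_le_ofReal hA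
  have haT : a ≠ ∞ := ENNReal.ofReal_ne_top
  have hB : ENNReal.ofReal ((2*A+1)*A) = (2*a+1)*a := by
    rw [ENNReal.ofReal_mul (by linarith), ENNReal.ofReal_add (by linarith) zero_le_one,
      ENNReal.ofReal_mul (by norm_num), ENNReal.ofReal_one, ENNReal.ofReal_ofNat]
  rw [hB]
  rcases key_arith ha1 haT hM hD' with hk | hk
  · exact (EMetric.ball_subset_ball hk).trans hball
  · intro y hy
    have hyp : edist y p < ((2*a+1)*a)⁻¹ * min d D' := EMetric.mem_ball.1 hy
    have hd'T : d' ≠ ∞ := by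
      intro hE
      rw [hE] at hk
      simp only [top_add] at hk
      exact (hk.trans_lt (hr.trans_lt ENNReal.ofReal_lt_top)).ne rfl
    have h2 : edist y x₀ < d' + ((2*a+1)*a)⁻¹ * min d D' := by
      calc edist y x₀ ≤ edist y p + edist p x₀ := edist_triangle _ _ _
        _ ≤ edist y p + d' := add_le_add_right hpd _
        _ < ((2*a+1)*a)⁻¹ * min d D' + d' := ENNReal.add_lt_add_right hd'T hyp
        _ = d' + ((2*a+1)*a)⁻¹ * min d D' := add_comm _ _
    exact eball_infDist_frontier_subset hDo hx₀ (h2.trans_le (hk.trans hr))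

lemma img_two_mul (c d : ℝ) : (fun u : ℝ => 2*u) '' Icc c d = Icc (2*c) (2*d) :=
  image_mul_left_Icc' two_pos c d

lemma img_two_mul_sub (c d : ℝ) : (fun u : ℝ => 2*u - 1) '' Icc c d = Icc (2*c - 1) (2*d - 1) := by
  have h : (fun u : ℝ => 2*u - 1) = fun u => 2*u + (-1) := by funext u; ring
  rw [h, image_affine_Icc' two_pos (-1) c d]
  congr 1 <;> ring

lemma mono_two_mul : Monotone (fun u : ℝ => 2*u) := fun x y h => by dsimp; linarith

lemma mono_two_mul_sub : Monotone (fun u : ℝ => 2*u - 1) := fun x y h => by dsimp; linarith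

/-- Concatenation of cigars: if two curves in `D` with common endpoint `x₀`
have their `A`-cigars in `D` and `dist(x₀,∂D) ≥ A⁻¹ min{d(γ₁),d(γ₂)}`, then the concatenation
has its `(2A+1)A`-cigar in `D`; similarly for length cigars. -/
theorem statement_4 (D : Set ℂ) (hDo : IsOpen D) (hDc : IsConnected D) (A : ℝ) (hA : 1 ≤ A)
    (γ₁ γ₂ : ℝ → ℂ) (hc₁ : ContinuousOn γ₁ (Set.Icc 0 1)) (hc₂ : ContinuousOn γ₂ (Set.Icc 0 1))
    (hm₁ : Set.MapsTo γ₁ (Set.Icc 0 1) D) (hm₂ : Set.MapsTo γ₂ (Set.Icc 0 1) D)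
    (x₀ : ℂ) (he₁ : γ₁ 1 = x₀) (he₂ : γ₂ 0 = x₀) :
    (((ENNReal.ofReal A)⁻¹ *
        min (EMetric.diam (γ₁ '' Set.Icc 0 1)) (EMetric.diam (γ₂ '' Set.Icc 0 1))
          ≤ ENNReal.ofReal (Metric.infDist x₀ (frontier D))) →
      diamCigar A γ₁ ⊆ D → diamCigar A γ₂ ⊆ D →
      diamCigar ((2*A+1)*A) (concatAt γ₁ γ₂) ⊆ D) ∧
    (((ENNReal.ofReal A)⁻¹ *
        min (eVariationOn γ₁ (Set.Icc 0 1)) (eVariationOn γ₂ (Set.Icc 0 1))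
          ≤ ENNReal.ofReal (Metric.infDist x₀ (frontier D))) →
      lenCigar A γ₁ ⊆ D → lenCigar A γ₂ ⊆ D →
      lenCigar ((2*A+1)*A) (concatAt γ₁ γ₂) ⊆ D) := by
  have hx₀D : x₀ ∈ D := he₁ ▸ hm₁ ⟨zero_le_one, le_rfl⟩
  constructor
  · -- diameter version
    intro hr h1 h2 y hy
    simp only [diamCigar, mem_iUnion, exists_prop] at hy
    obtain ⟨t, ht, hyt⟩ := hy
    by_cases htm : t ≤ 1/2
    · -- left half
      have hs01 : 2*t ∈ Icc (0:ℝ) 1 := ⟨by linarith [ht.1], by linarith⟩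
      have hgt : concatAt γ₁ γ₂ t = γ₁ (2*t) := by
        simp only [concatAt]; rw [if_pos htm]
      have hEq1 : EqOn (concatAt γ₁ γ₂) (fun u => γ₁ (2*u)) (Icc 0 t) := by
        intro u hu; simp only [concatAt]; rw [if_pos (hu.2.trans htm)]
      have himg1 : concatAt γ₁ γ₂ '' Icc 0 t = γ₁ '' Icc 0 (2*t) := by
        rw [image_congr hEq1,
          show (fun u : ℝ => γ₁ (2*u)) = γ₁ ∘ (fun u : ℝ => 2*u) from rfl,
          image_comp, img_two_mul]
        norm_num
      have himg2 : concatAt γ₁ γ₂ '' Icc t 1 ⊆ γ₁ '' Icc (2*t) 1 ∪ γ₂ '' Icc 0 1 := by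
        rintro _ ⟨u, hu, rfl⟩
        by_cases hu2 : u ≤ 1/2
        · exact Or.inl ⟨2*u, ⟨by linarith [hu.1], by linarith⟩, by simp only [concatAt]; rw [if_pos hu2]⟩
        · exact Or.inr ⟨2*u-1, ⟨by linarith [not_le.1 hu2], by linarith [hu.2]⟩,
            by simp only [concatAt]; rw [if_neg hu2]⟩
      have hx₀1 : x₀ ∈ γ₁ '' Icc (2*t) 1 := ⟨1, ⟨hs01.2, le_rfl⟩, he₁⟩
      have hx₀2 : x₀ ∈ γ₂ '' Icc 0 1 := ⟨0, ⟨le_rfl, zero_le_one⟩, he₂⟩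
      have hD' : EMetric.diam (concatAt γ₁ γ₂ '' Icc t 1)
          ≤ EMetric.diam (γ₁ '' Icc (2*t) 1) + EMetric.diam (γ₂ '' Icc 0 1) :=
        (EMetric.diam_mono himg2).trans (EMetric.diam_union' ⟨x₀, hx₀1, hx₀2⟩)
      have hMd : EMetric.diam (γ₁ '' Icc 0 (2*t)) ≤ EMetric.diam (γ₁ '' Icc 0 1) :=
        EMetric.diam_mono (image_mono (Icc_subset_Icc le_rfl hs01.2))
      have hpd : edist (γ₁ (2*t)) x₀ ≤ EMetric.diam (γ₁ '' Icc (2*t) 1) :=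
        EMetric.edist_le_diam_of_mem ⟨2*t, ⟨le_rfl, hs01.2⟩, rfl⟩ hx₀1
      have hball : EMetric.ball (γ₁ (2*t)) ((ENNReal.ofReal A)⁻¹ *
          min (EMetric.diam (γ₁ '' Icc 0 (2*t))) (EMetric.diam (γ₁ '' Icc (2*t) 1))) ⊆ D :=
        fun z hz => h1 (mem_biUnion hs01 hz)
      rw [hgt, himg1] at hyt
      exact cigar_step hDo hA hx₀D hMd hD' hpd hball hr hyt
    · -- right half
      have ht2 : (1:ℝ)/2 < t := not_le.1 htm
      have hs01 : 2*t-1 ∈ Icc (0:ℝ) 1 := ⟨by linarith, by linarith [ht.2]⟩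
      have hgt : concatAt γ₁ γ₂ t = γ₂ (2*t-1) := by
        simp only [concatAt]; rw [if_neg htm]
      have hEq1 : EqOn (concatAt γ₁ γ₂) (fun u => γ₂ (2*u-1)) (Icc t 1) := by
        intro u hu
        simp only [concatAt]; rw [if_neg (not_le.2 (lt_of_lt_of_le ht2 hu.1))]
      have himg1 : concatAt γ₁ γ₂ '' Icc t 1 = γ₂ '' Icc (2*t-1) 1 := by
        rw [image_congr hEq1,
          show (fun u : ℝ => γ₂ (2*u-1)) = γ₂ ∘ (fun u : ℝ => 2*u-1) from rfl,
          image_comp, img_two_mul_sub]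
        norm_num
      have himg2 : concatAt γ₁ γ₂ '' Icc 0 t ⊆ γ₁ '' Icc 0 1 ∪ γ₂ '' Icc 0 (2*t-1) := by
        rintro _ ⟨u, hu, rfl⟩
        by_cases hu2 : u ≤ 1/2
        · exact Or.inl ⟨2*u, ⟨by linarith [hu.1], by linarith⟩, by simp only [concatAt]; rw [if_pos hu2]⟩
        · exact Or.inr ⟨2*u-1, ⟨by linarith [not_le.1 hu2], by linarith [hu.2]⟩,
            by simp only [concatAt]; rw [if_neg hu2]⟩
      have hx₀1 : x₀ ∈ γ₁ '' Icc 0 1 := ⟨1, ⟨zero_le_one, le_rfl⟩, he₁⟩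
      have hx₀2 : x₀ ∈ γ₂ '' Icc 0 (2*t-1) := ⟨0, ⟨le_rfl, hs01.1⟩, he₂⟩
      have hD' : EMetric.diam (concatAt γ₁ γ₂ '' Icc 0 t)
          ≤ EMetric.diam (γ₂ '' Icc 0 (2*t-1)) + EMetric.diam (γ₁ '' Icc 0 1) :=
        (EMetric.diam_mono himg2).trans
          ((EMetric.diam_union' ⟨x₀, hx₀1, hx₀2⟩).trans_eq (add_comm _ _))
      have hMd : EMetric.diam (γ₂ '' Icc (2*t-1) 1) ≤ EMetric.diam (γ₂ '' Icc 0 1) :=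
        EMetric.diam_mono (image_mono (Icc_subset_Icc hs01.1 le_rfl))
      have hpd : edist (γ₂ (2*t-1)) x₀ ≤ EMetric.diam (γ₂ '' Icc 0 (2*t-1)) :=
        EMetric.edist_le_diam_of_mem ⟨2*t-1, ⟨hs01.1, le_rfl⟩, rfl⟩ hx₀2
      have hball : EMetric.ball (γ₂ (2*t-1)) ((ENNReal.ofReal A)⁻¹ *
          min (EMetric.diam (γ₂ '' Icc (2*t-1) 1)) (EMetric.diam (γ₂ '' Icc 0 (2*t-1)))) ⊆ D := by
        rw [min_comm]
        exact fun z hz => h2 (mem_biUnion hs01 hz)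
      rw [min_comm] at hr
      rw [hgt, himg1, min_comm] at hyt
      exact cigar_step hDo hA hx₀D hMd hD' hpd hball hr hyt
  · -- length version
    intro hr h1 h2 y hy
    simp only [lenCigar, mem_iUnion, exists_prop] at hy
    obtain ⟨t, ht, hyt⟩ := hy
    by_cases htm : t ≤ 1/2
    · -- left half
      have hs01 : 2*t ∈ Icc (0:ℝ) 1 := ⟨by linarith [ht.1], by linarith⟩
      have hgt : concatAt γ₁ γ₂ t = γ₁ (2*t) := by
        simp only [concatAt]; rw [if_pos htm]
      have hEq1 : EqOn (concatAt γ₁ γ₂) (γ₁ ∘ fun u => 2*u) (Icc 0 t) := by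
        intro u hu; simp only [concatAt, Function.comp]; rw [if_pos (hu.2.trans htm)]
      have hvar1 : eVariationOn (concatAt γ₁ γ₂) (Icc 0 t) = eVariationOn γ₁ (Icc 0 (2*t)) := by
        rw [eVariationOn.eq_of_eqOn hEq1,
          eVariationOn.comp_eq_of_monotoneOn γ₁ _ (mono_two_mul.monotoneOn _), img_two_mul]
        norm_num
      have hEq2 : EqOn (concatAt γ₁ γ₂) (γ₁ ∘ fun u => 2*u) (Icc t (1/2)) := by
        intro u hu; simp only [concatAt, Function.comp]; rw [if_pos hu.2]
      have hEq3 : EqOn (concatAt γ₁ γ₂) (γ₂ ∘ fun u => 2*u-1) (Icc (1/2) 1) := by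
        intro u hu
        rcases eq_or_lt_of_le hu.1 with hh | hh
        · simp only [concatAt, Function.comp, ← hh]
          rw [if_pos le_rfl]
          norm_num [he₁, he₂]
        · simp only [concatAt, Function.comp]; rw [if_neg (not_le.2 hh)]
      have hsp := eVariationOn.Icc_add_Icc (concatAt γ₁ γ₂) (s := univ) htm
        (by norm_num : (1:ℝ)/2 ≤ 1) (mem_univ _)
      simp only [univ_inter] at hsp
      have e1 : eVariationOn (concatAt γ₁ γ₂) (Icc t (1/2)) = eVariationOn γ₁ (Icc (2*t) 1) := by
        rw [eVariationOn.eq_of_eqOn hEq2,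
          eVariationOn.comp_eq_of_monotoneOn γ₁ _ (mono_two_mul.monotoneOn _), img_two_mul]
        norm_num
      have e2 : eVariationOn (concatAt γ₁ γ₂) (Icc (1/2) 1) = eVariationOn γ₂ (Icc 0 1) := by
        rw [eVariationOn.eq_of_eqOn hEq3,
          eVariationOn.comp_eq_of_monotoneOn γ₂ _ (mono_two_mul_sub.monotoneOn _),
          img_two_mul_sub]
        norm_num
      have hD' : eVariationOn (concatAt γ₁ γ₂) (Icc t 1)
          ≤ eVariationOn γ₁ (Icc (2*t) 1) + eVariationOn γ₂ (Icc 0 1) := by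
        rw [← hsp, e1, e2]
      have hMd : eVariationOn γ₁ (Icc 0 (2*t)) ≤ eVariationOn γ₁ (Icc 0 1) :=
        eVariationOn.mono γ₁ (Icc_subset_Icc le_rfl hs01.2)
      have hpd : edist (γ₁ (2*t)) x₀ ≤ eVariationOn γ₁ (Icc (2*t) 1) := by
        rw [← he₁]
        exact eVariationOn.edist_le γ₁ ⟨le_rfl, hs01.2⟩ ⟨hs01.2, le_rfl⟩
      have hball : EMetric.ball (γ₁ (2*t)) ((ENNReal.ofReal A)⁻¹ *
          min (eVariationOn γ₁ (Icc 0 (2*t))) (eVariationOn γ₁ (Icc (2*t) 1))) ⊆ D :=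
        fun z hz => h1 (mem_biUnion hs01 hz)
      rw [hgt, hvar1] at hyt
      exact cigar_step hDo hA hx₀D hMd hD' hpd hball hr hyt
    · -- right half
      have ht2 : (1:ℝ)/2 < t := not_le.1 htm
      have hs01 : 2*t-1 ∈ Icc (0:ℝ) 1 := ⟨by linarith, by linarith [ht.2]⟩
      have hgt : concatAt γ₁ γ₂ t = γ₂ (2*t-1) := by
        simp only [concatAt]; rw [if_neg htm]
      have hEq1 : EqOn (concatAt γ₁ γ₂) (γ₂ ∘ fun u => 2*u-1) (Icc t 1) := by
        intro u hu
        simp only [concatAt, Function.comp]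
        rw [if_neg (not_le.2 (lt_of_lt_of_le ht2 hu.1))]
      have hvar1 : eVariationOn (concatAt γ₁ γ₂) (Icc t 1) = eVariationOn γ₂ (Icc (2*t-1) 1) := by
        rw [eVariationOn.eq_of_eqOn hEq1,
          eVariationOn.comp_eq_of_monotoneOn γ₂ _ (mono_two_mul_sub.monotoneOn _),
          img_two_mul_sub]
        norm_num
      have hEq2 : EqOn (concatAt γ₁ γ₂) (γ₁ ∘ fun u => 2*u) (Icc 0 (1/2)) := by
        intro u hu; simp only [concatAt, Function.comp]; rw [if_pos hu.2]
      have hEq3 : EqOn (concatAt γ₁ γ₂) (γ₂ ∘ fun u => 2*u-1) (Icc (1/2) t) := by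
        intro u hu
        rcases eq_or_lt_of_le hu.1 with hh | hh
        · simp only [concatAt, Function.comp, ← hh]
          rw [if_pos le_rfl]
          norm_num [he₁, he₂]
        · simp only [concatAt, Function.comp]; rw [if_neg (not_le.2 hh)]
      have hsp := eVariationOn.Icc_add_Icc (concatAt γ₁ γ₂) (s := univ)
        (by norm_num : (0:ℝ) ≤ 1/2) ht2.le (mem_univ _)
      simp only [univ_inter] at hsp
      have e1 : eVariationOn (concatAt γ₁ γ₂) (Icc 0 (1/2)) = eVariationOn γ₁ (Icc 0 1) := by
        rw [eVariationOn.eq_of_eqOn hEq2,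
          eVariationOn.comp_eq_of_monotoneOn γ₁ _ (mono_two_mul.monotoneOn _), img_two_mul]
        norm_num
      have e2 : eVariationOn (concatAt γ₁ γ₂) (Icc (1/2) t) = eVariationOn γ₂ (Icc 0 (2*t-1)) := by
        rw [eVariationOn.eq_of_eqOn hEq3,
          eVariationOn.comp_eq_of_monotoneOn γ₂ _ (mono_two_mul_sub.monotoneOn _),
          img_two_mul_sub]
        norm_num
      have hD' : eVariationOn (concatAt γ₁ γ₂) (Icc 0 t)
          ≤ eVariationOn γ₂ (Icc 0 (2*t-1)) + eVariationOn γ₁ (Icc 0 1) := by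
        rw [← hsp, e1, e2, add_comm]
      have hMd : eVariationOn γ₂ (Icc (2*t-1) 1) ≤ eVariationOn γ₂ (Icc 0 1) :=
        eVariationOn.mono γ₂ (Icc_subset_Icc hs01.1 le_rfl)
      have hpd : edist (γ₂ (2*t-1)) x₀ ≤ eVariationOn γ₂ (Icc 0 (2*t-1)) := by
        rw [← he₂]
        exact eVariationOn.edist_le γ₂ ⟨hs01.1, le_rfl⟩ ⟨le_rfl, hs01.1⟩
      have hball : EMetric.ball (γ₂ (2*t-1)) ((ENNReal.ofReal A)⁻¹ *
          min (eVariationOn γ₂ (Icc (2*t-1) 1)) (eVariationOn γ₂ (Icc 0 (2*t-1)))) ⊆ D := by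
        rw [min_comm]
        exact fun z hz => h2 (mem_biUnion hs01 hz)
      rw [min_comm] at hr
      rw [hgt, hvar1, min_comm] at hyt
      exact cigar_step hDo hA hx₀D hMd hD' hpd hball hr hyt
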